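/- arXiv:1005.2958 — 3 statements merged into one kernel-verified Lean document; each statement's English description precedes it below -/
import Mathlib

section
/- Let T ∈ ℚ[[s]] be the unique formal power series satisfying T = exp(sT). Then the coefficient of s^k in T equals (k+1)^k/(k+1)! for every k ≥ 0; that is, T = Σ_{k≥0} ((k+1)^k/(k+1)!)·s^k (the Cayley formula for rooted trees). -/
/-- Formal partial derivative `∂f/∂x_i` of a multivariate formal power series. -/
noncomputable def pd {σ : Type*} (R : Type*) [CommSemiring R]
    (i : σ) (f : MvPowerSeries σ R) : MvPowerSeries σ R :=
  fun m => (((m i) + 1 : ℕ) : R) * MvPowerSeries.coeff (m + Finsupp.single i 1) f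

/-- Total degree of a monomial. -/
def mdeg {σ : Type*} (m : σ →₀ ℕ) : ℕ := m.sum fun _ e => e

/-- `exp f = Σ_{k≥0} f^k/k!` for `f` with zero constant coefficient, computed
coefficientwise: since `f^k` has order `≥ k`, only `k ≤ deg m` contribute to the
coefficient at a monomial `m`. -/
noncomputable def expS {σ R : Type*} [CommRing R] [Algebra ℚ R]
    (f : MvPowerSeries σ R) : MvPowerSeries σ R :=
  fun m => MvPowerSeries.coeff m
    (∑ k ∈ Finset.range (mdeg m + 1), ((k.factorial : ℚ)⁻¹) • f ^ k)

/-- `log(1 − u) = −Σ_{k≥1} u^k/k` for `u` with zero constant coefficient, computed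
coefficientwise: since `u^k` has order `≥ k`, only `k ≤ deg m` contribute. -/
noncomputable def logOneSubS {σ R : Type*} [CommRing R] [Algebra ℚ R]
    (u : MvPowerSeries σ R) : MvPowerSeries σ R :=
  fun m => MvPowerSeries.coeff m
    (- ∑ k ∈ Finset.Icc 1 (mdeg m), ((k : ℚ)⁻¹) • u ^ k)

section
open Finset

lemma pascal_step (n : ℕ) (f : ℕ → ℚ) :
    ∑ k ∈ range (n+2), (-1:ℚ)^k * ((n+1).choose k : ℚ) * f k
      = ∑ k ∈ range (n+1), (-1:ℚ)^k * (n.choose k : ℚ) * (f k - f (k+1)) := by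
  have h1 : ∑ k ∈ range (n+1), (-1:ℚ)^k * (n.choose k : ℚ) * f k
      = f 0 - ∑ k ∈ range (n+1), (-1:ℚ)^k * (n.choose (k+1) : ℚ) * f (k+1) := by
    rw [Finset.sum_range_succ' (fun k => (-1:ℚ)^k * (n.choose k : ℚ) * f k) n,
      Finset.sum_range_succ (fun k => (-1:ℚ)^k * (n.choose (k+1) : ℚ) * f (k+1)) n]
    simp [pow_succ]
    ring
  rw [Finset.sum_range_succ' (fun k => (-1:ℚ)^k * ((n+1).choose k : ℚ) * f k) (n+1)]
  simp only [Nat.choose_succ_succ, Nat.cast_add, mul_sub]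
  rw [Finset.sum_sub_distrib, h1]
  have h2 : ∀ x ∈ range (n+1), (-1:ℚ)^(x+1) * ((n.choose x : ℚ) + (n.choose (x+1) : ℚ)) * f (x+1)
      = -((-1:ℚ)^x * (n.choose x : ℚ) * f (x+1)) + -((-1:ℚ)^x * (n.choose (x+1) : ℚ) * f (x+1)) := by
    intro x _; ring
  rw [Finset.sum_congr rfl h2, Finset.sum_add_distrib, Finset.sum_neg_distrib,
    Finset.sum_neg_distrib]
  simp
  ring

end

section
open Finset


lemma alt_sum : ∀ n : ℕ, ∀ j, j < n → ∀ x : ℚ,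
    ∑ k ∈ range (n+1), (-1:ℚ)^k * (n.choose k : ℚ) * (x + k)^j = 0 := by
  intro n
  induction n with
  | zero => intro j hj; omega
  | succ n ih =>
    intro j hj x
    rw [pascal_step n (fun k => (x + (k:ℚ))^j)]
    have key : ∀ k : ℕ, (x + (k:ℚ))^j - (x + ((k+1:ℕ):ℚ))^j
        = -∑ i ∈ range j, (j.choose i : ℚ) * (x + k)^i := by
      intro k
      have hb : (x + (k:ℚ) + 1)^j = ∑ i ∈ range (j+1), (x + (k:ℚ))^i * (j.choose i : ℚ) := by
        rw [add_pow]
        simp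
      rw [Finset.sum_range_succ] at hb
      push_cast
      rw [show x + ((k:ℚ)+1) = x + (k:ℚ) + 1 by ring, hb]
      simp [Finset.mul_sum]
      exact Finset.sum_congr rfl fun i _ => by ring
    simp only [key]
    have : ∀ k ∈ range (n+1), (-1:ℚ)^k * (n.choose k : ℚ) *
        -∑ i ∈ range j, (j.choose i : ℚ) * (x + k)^i
        = -∑ i ∈ range j, (j.choose i : ℚ) * ((-1:ℚ)^k * (n.choose k : ℚ) * (x + k)^i) := by
      intro k _
      rw [mul_neg, Finset.mul_sum, neg_inj]
      exact Finset.sum_congr rfl fun i _ => by ring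
    rw [Finset.sum_congr rfl this, Finset.sum_neg_distrib, Finset.sum_comm]
    have : ∀ i ∈ range j, ∑ k ∈ range (n+1), (j.choose i : ℚ) * ((-1:ℚ)^k * (n.choose k : ℚ) * (x + k)^i) = 0 := by
      intro i hi
      rw [← Finset.mul_sum, ih i (lt_of_lt_of_le (mem_range.mp hi) (Nat.lt_succ_iff.mp hj)) x, mul_zero]
    rw [Finset.sum_congr rfl this]
    simp

end

noncomputable def wq (k : ℕ) : ℚ := ((k:ℚ)+1)^k / ((k:ℚ)+1)

section
open Finset Polynomial



lemma abelPoly : ∀ n : ℕ, ∀ c : ℚ,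
    ∑ k ∈ range (n+1), C ((n.choose k : ℚ) * wq k) * (X + C (c + ((n-k:ℕ):ℚ)))^(n-k)
      = (X + C (c + n + 1))^n := by
  intro n
  induction n with
  | zero => intro c; simp [wq]
  | succ n ih =>
    intro c
    set L := ∑ k ∈ range (n+1+1), C (((n+1).choose k : ℚ) * wq k) *
        (X + C (c + ((n+1-k:ℕ):ℚ)))^(n+1-k) with hL
    set R := (X + C (c + (n+1:ℕ) + 1))^(n+1) with hR
    have hder : derivative L = derivative R := by
      rw [hL, hR, derivative_sum, derivative_pow]
      have : ∀ k ∈ range (n+1+1), derivative (C (((n+1).choose k : ℚ) * wq k) *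
          (X + C (c + ((n+1-k:ℕ):ℚ)))^(n+1-k))
          = C (((n+1).choose k : ℚ) * wq k) * (C ((n+1-k:ℕ):ℚ) *
            (X + C (c + ((n+1-k:ℕ):ℚ)))^(n+1-k-1)) := by
        intro k _
        rw [derivative_C_mul, derivative_pow]
        simp
      rw [Finset.sum_congr rfl this]
      rw [Finset.sum_range_succ]
      simp only [Nat.sub_self, Nat.cast_zero, map_zero, zero_mul, mul_zero, add_zero]
      have step : ∀ k ∈ range (n+1), C (((n+1).choose k : ℚ) * wq k) *
          (C ((n+1-k:ℕ):ℚ) * (X + C (c + ((n+1-k:ℕ):ℚ)))^(n+1-k-1))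
          = C ((n+1:ℚ)) * (C ((n.choose k : ℚ) * wq k) * (X + C ((c+1) + ((n-k:ℕ):ℚ)))^(n-k)) := by
        intro k hk
        have hk' : k ≤ n := Nat.lt_succ_iff.mp (mem_range.mp hk)
        have e1 : n+1-k-1 = n-k := by omega
        have e2 : c + ((n+1-k:ℕ):ℚ) = (c+1) + ((n-k:ℕ):ℚ) := by
          rw [Nat.cast_sub (by omega), Nat.cast_sub hk']
          push_cast; ring
        have e3 : (((n+1).choose k : ℚ)) * ((n+1-k:ℕ):ℚ) = (n+1:ℚ) * (n.choose k : ℚ) := by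
          have := Nat.choose_mul_succ_eq n k
          have : ((n.choose k * (n+1) : ℕ) : ℚ) = (((n+1).choose k * (n+1-k) : ℕ) : ℚ) := by
            exact_mod_cast congrArg (Nat.cast : ℕ → ℚ) this
          push_cast at this
          linarith [this]
        rw [e1, e2]
        rw [show C (((n+1).choose k : ℚ) * wq k) * (C ((n+1-k:ℕ):ℚ) *
            (X + C ((c+1) + ((n-k:ℕ):ℚ)))^(n-k))
          = C ((((n+1).choose k : ℚ) * ((n+1-k:ℕ):ℚ)) * wq k) *
            (X + C ((c+1) + ((n-k:ℕ):ℚ)))^(n-k) from by simp only [map_mul]; ring]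
        rw [show (((n+1).choose k : ℚ) * ((n+1-k:ℕ):ℚ)) * wq k
          = (n+1:ℚ) * ((n.choose k : ℚ) * wq k) from by rw [e3]; ring]
        simp only [map_mul]
        ring
      rw [Finset.sum_congr rfl step, ← Finset.mul_sum, ih (c+1)]
      simp only [derivative_add, derivative_X, derivative_C, add_zero, mul_one,
        Nat.add_sub_cancel]
      push_cast
      ring
    have heval : L.eval (-(c + (n:ℚ) + 2)) = 0 := by
      rw [hL, eval_finset_sum]
      have : ∀ k ∈ range (n+1+1), eval (-(c + (n:ℚ) + 2)) (C (((n+1).choose k : ℚ) * wq k) *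
          (X + C (c + ((n+1-k:ℕ):ℚ)))^(n+1-k))
          = (-1:ℚ)^(n+1) * ((-1:ℚ)^k * (((n+1).choose k : ℚ)) * ((1:ℚ) + k)^n) := by
        intro k hk
        have hk' : k ≤ n+1 := Nat.lt_succ_iff.mp (mem_range.mp hk)
        simp only [eval_mul, eval_pow, eval_add, eval_X, eval_C]
        rw [Nat.cast_sub hk']
        rw [show -(c + (n:ℚ) + 2) + (c + (((n+1:ℕ):ℚ) - k)) = -((k:ℚ)+1) by push_cast; ring]
        rw [show (-((k:ℚ)+1)) = (-1) * ((k:ℚ)+1) by ring, mul_pow, wq]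
        have hne : ((k:ℚ)+1) ≠ 0 := by positivity
        have epow : ((k:ℚ)+1)^k / ((k:ℚ)+1) * ((k:ℚ)+1)^(n+1-k) = ((k:ℚ)+1)^n := by
          rw [div_mul_eq_mul_div, ← pow_add, show k + (n+1-k) = n+1 by omega,
            pow_succ, mul_div_assoc, div_self hne, mul_one]
        have esign : (-1:ℚ)^(n+1-k) = (-1:ℚ)^(n+1) * (-1:ℚ)^k := by
          rw [← pow_add, show n+1+k = (n+1-k) + 2*k by omega, pow_add, pow_mul]
          norm_num
        calc (((n+1).choose k : ℚ) * (((k:ℚ)+1)^k / ((k:ℚ)+1))) *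
              ((-1:ℚ)^(n+1-k) * ((k:ℚ)+1)^(n+1-k))
            = (-1:ℚ)^(n+1-k) * (((n+1).choose k : ℚ)) *
              (((k:ℚ)+1)^k / ((k:ℚ)+1) * ((k:ℚ)+1)^(n+1-k)) := by ring
          _ = (-1:ℚ)^(n+1) * ((-1:ℚ)^k * (((n+1).choose k : ℚ)) * ((1:ℚ)+k)^n) := by
              rw [epow, esign]; ring
      rw [Finset.sum_congr rfl this, ← Finset.mul_sum, alt_sum (n+1) n (by omega) 1, mul_zero]
    have hdiff : L - R = Polynomial.C ((L-R).coeff 0) := by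
      apply eq_C_of_derivative_eq_zero
      rw [derivative_sub, hder, sub_self]
    have hRe : R.eval (-(c + (n:ℚ) + 2)) = 0 := by
      rw [hR]
      simp only [eval_pow, eval_add, eval_X, eval_C]
      rw [show -(c + (n:ℚ) + 2) + (c + ((n+1:ℕ):ℚ) + 1) = 0 by push_cast; ring]
      simp
    have : (L - R).eval (-(c + (n:ℚ) + 2)) = 0 := by
      rw [eval_sub, heval, hRe, sub_self]
    rw [hdiff, eval_C] at this
    rw [this, map_zero] at hdiff
    exact sub_eq_zero.mp hdiff

end

section
open Finset



lemma coeff_expS (f : PowerSeries ℚ) (n : ℕ) :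
    PowerSeries.coeff n (expS f) =
      PowerSeries.coeff n (∑ k ∈ range (n+1), ((k.factorial : ℚ)⁻¹) • f^k) := by
  have hm : mdeg (Finsupp.single () n) = n := by
    simp [mdeg]
  show (expS f) (Finsupp.single () n) = _
  rw [expS, hm]
  rfl

-- vanishing
lemma coeff_X_mul_pow (f : PowerSeries ℚ) (k n : ℕ) (h : n < k) :
    PowerSeries.coeff n ((PowerSeries.X * f)^k) = 0 := by
  rw [mul_pow]
  rw [PowerSeries.coeff_X_pow_mul' ]
  simp [Nat.not_le.mpr h]

end

section
open Finset PowerSeries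





section Main
variable (T : PowerSeries ℚ) (hT : T = expS (PowerSeries.X * T))
include hT

lemma hc (n : ℕ) : coeff n T =
    coeff n (∑ k ∈ range (n+1), ((k.factorial : ℚ)⁻¹) • (X * T)^k) := by
  conv_lhs => rw [hT]
  exact coeff_expS (X * T) n

lemma trunc_coeff (n j : ℕ) (hj : j ≤ n) :
    coeff j (∑ k ∈ range (n+1), ((k.factorial : ℚ)⁻¹) • (X * T)^k) = coeff j T := by
  rw [map_sum]
  rw [show ∑ k ∈ range (n+1), coeff j (((k.factorial : ℚ)⁻¹) • (X * T)^k)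
      = ∑ k ∈ range (j+1), coeff j (((k.factorial : ℚ)⁻¹) • (X * T)^k) by
    symm
    apply Finset.sum_subset (by intro x hx; simp at hx ⊢; omega)
    intro x _ hx
    simp only [mem_range, not_lt] at hx
    rw [PowerSeries.coeff_smul, coeff_X_mul_pow _ _ _ (by omega), smul_zero]]
  rw [← map_sum, ← hc T hT j]

lemma t_zero : coeff 0 T = 1 := by
  rw [hc T hT 0]
  simp

lemma t_rec (n : ℕ) : coeff (n+1) T * ((n:ℚ)+1) =
    ∑ p ∈ antidiagonal n, coeff p.1 T * (coeff p.2 T * ((p.2:ℚ)+1)) := by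
  have h1 : coeff (n+1) T * ((n:ℚ)+1)
      = coeff n (d⁄dX ℚ (∑ k ∈ range (n+2), ((k.factorial : ℚ)⁻¹) • (X * T)^k)) := by
    rw [PowerSeries.coeff_derivative, ← hc T hT (n+1)]
  have h2 : d⁄dX ℚ (∑ k ∈ range (n+2), ((k.factorial : ℚ)⁻¹) • (X * T)^k)
      = (∑ m ∈ range (n+1), ((m.factorial : ℚ)⁻¹) • (X * T)^m) * d⁄dX ℚ (X * T) := by
    rw [map_sum, Finset.sum_range_succ' _ (n+1)]
    have h0 : (d⁄dX ℚ) (((Nat.factorial 0 : ℕ):ℚ)⁻¹ • (X * T)^0) = 0 := by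
      simp
    rw [h0, add_zero, Finset.sum_mul]
    apply Finset.sum_congr rfl
    intro m _
    rw [Derivation.map_smul, Derivation.leibniz_pow, Nat.add_sub_cancel,
      ← Nat.cast_smul_eq_nsmul ℚ, smul_smul, smul_eq_mul]
    rw [show ((((m+1).factorial : ℕ):ℚ))⁻¹ * ((m+1:ℕ):ℚ) = (((m.factorial:ℕ)):ℚ)⁻¹ by
      rw [Nat.factorial_succ]
      push_cast
      rw [mul_inv]
      have : ((m:ℚ)+1) ≠ 0 := by positivity
      field_simp]
    rw [smul_mul_assoc]
  rw [h1, h2, PowerSeries.coeff_mul]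
  apply Finset.sum_congr rfl
  intro p hp
  have hmem := Finset.HasAntidiagonal.mem_antidiagonal.mp hp
  rw [trunc_coeff T hT n p.1 (by omega)]
  congr 1
  rw [PowerSeries.coeff_derivative, PowerSeries.coeff_succ_X_mul]

end Main

end

section
open Finset Polynomial


noncomputable def aq (k : ℕ) : ℚ := ((k:ℚ)+1)^k / ((k+1).factorial : ℚ)


lemma abelEval (n : ℕ) :
    ∑ k ∈ range (n+1), (n.choose k : ℚ) * wq k * (((n-k:ℕ):ℚ)+1)^(n-k) = ((n:ℚ)+2)^n := by
  have h := congrArg (Polynomial.eval (1:ℚ)) (abelPoly n 0)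
  rw [eval_finset_sum] at h
  simp only [eval_mul, eval_pow, eval_add, eval_X, eval_C, zero_add] at h
  rw [show (1:ℚ) + ((n:ℚ) + 1) = (n:ℚ)+2 by ring] at h
  rw [← h]
  apply Finset.sum_congr rfl
  intro k _
  rw [show (1:ℚ) + ((n-k:ℕ):ℚ) = ((n-k:ℕ):ℚ) + 1 by ring]

lemma ratIdentity (n : ℕ) :
    ∑ p ∈ antidiagonal n, aq p.1 * (aq p.2 * ((p.2:ℚ)+1)) = aq (n+1) * ((n:ℚ)+1) := by
  rw [Finset.Nat.sum_antidiagonal_eq_sum_range_succ_mk]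
  have term_eq : ∀ k ∈ range (n+1), aq k * (aq (n-k) * (((n-k:ℕ):ℚ)+1))
      = (n.choose k : ℚ) * wq k * ((((n-k:ℕ)):ℚ)+1)^(n-k) * ((n.factorial:ℚ))⁻¹ := by
    intro k hk
    have hkn : k ≤ n := Nat.lt_succ_iff.mp (mem_range.mp hk)
    rw [aq, aq, wq, Nat.cast_choose ℚ hkn]
    have e1 : ((k+1).factorial : ℚ) = ((k:ℚ)+1) * (k.factorial : ℚ) := by
      rw [Nat.factorial_succ]; push_cast; ring
    have e2 : ((n-k+1).factorial : ℚ) = (((n-k:ℕ):ℚ)+1) * ((n-k).factorial : ℚ) := by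
      rw [Nat.factorial_succ]; push_cast; ring
    rw [e1, e2]
    generalize (n - k : ℕ) = j
    have h1 : (k.factorial : ℚ) ≠ 0 := Nat.cast_ne_zero.mpr (Nat.factorial_ne_zero k)
    have h2 : (j.factorial : ℚ) ≠ 0 := Nat.cast_ne_zero.mpr (Nat.factorial_ne_zero _)
    have h3 : (n.factorial : ℚ) ≠ 0 := Nat.cast_ne_zero.mpr (Nat.factorial_ne_zero n)
    have h4 : ((k:ℚ)+1) ≠ 0 := by positivity
    have h5 : ((j:ℚ))+1 ≠ 0 := by positivity
    field_simp
  rw [Finset.sum_congr rfl term_eq]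
  rw [← Finset.sum_mul, abelEval n]
  rw [aq]
  have e3 : ((n+1+1).factorial : ℚ) = ((n:ℚ)+2) * (((n:ℚ))+1) * (n.factorial : ℚ) := by
    rw [Nat.factorial_succ, Nat.factorial_succ]; push_cast; ring
  rw [e3]
  have h3 : (n.factorial : ℚ) ≠ 0 := Nat.cast_ne_zero.mpr (Nat.factorial_ne_zero n)
  have h6 : ((n:ℚ)+2) ≠ 0 := by positivity
  have h7 : ((n:ℚ)+1) ≠ 0 := by positivity
  push_cast
  field_simp
  ring

end

/-- **Cayley's formula.** If `T ∈ ℚ[[s]]` satisfies `T = exp(sT)`, then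
the coefficient of `s^k` in `T` is `(k+1)^k/(k+1)!`. -/
theorem stmt12 (T : PowerSeries ℚ) (hT : T = expS (PowerSeries.X * T)) :
    ∀ k : ℕ, PowerSeries.coeff k T =
      ((k + 1 : ℚ)) ^ k / ((k + 1).factorial : ℚ) := by
  intro k
  induction k using Nat.strong_induction_on with
  | _ k ih =>
    match k with
    | 0 =>
      rw [t_zero T hT]
      simp
    | n+1 =>
      have h := t_rec T hT n
      have hsub : ∀ p ∈ Finset.HasAntidiagonal.antidiagonal n,
          PowerSeries.coeff p.1 T * (PowerSeries.coeff p.2 T * ((p.2:ℚ)+1))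
          = aq p.1 * (aq p.2 * ((p.2:ℚ)+1)) := by
        intro p hp
        have hm := Finset.HasAntidiagonal.mem_antidiagonal.mp hp
        rw [ih p.1 (by omega), ih p.2 (by omega)]
        rw [aq, aq]
      rw [Finset.sum_congr rfl hsub, ratIdentity n] at h
      have hne : ((n:ℚ)+1) ≠ 0 := by positivity
      have hcan := mul_right_cancel₀ hne h
      rw [hcan, aq]
end

section
/- There exists a unique formal power series Φ ∈ ℚ[[x,s]] in two variables satisfying the functional equation exp(x + sΦ) = 1 + x + (s+1)·Φ, where exp(u) := Σ_{k≥0} u^k/k! (well defined since x + sΦ has zero constant coefficient). -/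
namespace Stmt13Aux

open MvPowerSeries

abbrev PS := MvPowerSeries (Fin 2) ℚ

lemma mdeg_add (a b : Fin 2 →₀ ℕ) : mdeg (a + b) = mdeg a + mdeg b :=
  Finsupp.sum_add_index' (fun _ => rfl) (fun _ _ _ => rfl)

lemma mdeg_single : mdeg (Finsupp.single (1 : Fin 2) 1) = 1 := by
  simp [mdeg]

/-- Agreement of all coefficients in total degree `< n`. -/
def Agr (n : ℕ) (Φ Ψ : PS) : Prop :=
  ∀ m : Fin 2 →₀ ℕ, mdeg m < n → coeff m Φ = coeff m Ψ

lemma agr_mul_X {n : ℕ} {Φ Ψ : PS} (h : Agr n Φ Ψ) {m : Fin 2 →₀ ℕ}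
    (hm : mdeg m ≤ n) : coeff m (X 1 * Φ) = coeff m (X 1 * Ψ) := by
  rw [coeff_mul, coeff_mul]
  refine Finset.sum_congr rfl fun p hp => ?_
  rw [Finset.HasAntidiagonal.mem_antidiagonal] at hp
  by_cases hc : p.1 = Finsupp.single 1 1
  · have hd : mdeg p.1 + mdeg p.2 = mdeg m := by rw [← mdeg_add, hp]
    rw [hc, mdeg_single] at hd
    rw [h p.2 (by omega)]
  · rw [coeff_X, if_neg hc, zero_mul, zero_mul]

lemma agr_f {n : ℕ} {Φ Ψ : PS} (h : Agr n Φ Ψ) {m : Fin 2 →₀ ℕ}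
    (hm : mdeg m ≤ n) :
    coeff m (X 0 + X 1 * Φ) = coeff m (X 0 + X 1 * Ψ) := by
  rw [map_add, map_add, agr_mul_X h hm]

lemma agr_pow {n : ℕ} {Φ Ψ : PS} (h : Agr n Φ Ψ) (k : ℕ) {m : Fin 2 →₀ ℕ}
    (hm : mdeg m ≤ n) :
    coeff m ((X 0 + X 1 * Φ) ^ k) = coeff m ((X 0 + X 1 * Ψ) ^ k) := by
  induction k generalizing m with
  | zero => simp
  | succ k ih =>
    rw [pow_succ, pow_succ, coeff_mul, coeff_mul]
    refine Finset.sum_congr rfl fun p hp => ?_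
    rw [Finset.HasAntidiagonal.mem_antidiagonal] at hp
    have hd : mdeg p.1 + mdeg p.2 = mdeg m := by rw [← mdeg_add, hp]
    rw [ih (by omega), agr_f h (by omega)]

lemma agr_exp {n : ℕ} {Φ Ψ : PS} (h : Agr n Φ Ψ) {m : Fin 2 →₀ ℕ}
    (hm : mdeg m ≤ n) :
    coeff m (expS (X 0 + X 1 * Φ)) = coeff m (expS (X 0 + X 1 * Ψ)) := by
  rw [coeff_apply, coeff_apply]
  show coeff m (∑ k ∈ Finset.range (mdeg m + 1), _) =
    coeff m (∑ k ∈ Finset.range (mdeg m + 1), _)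
  rw [map_sum, map_sum]
  refine Finset.sum_congr rfl fun k _ => ?_
  rw [coeff_smul, coeff_smul, agr_pow h k hm]

noncomputable def T (Φ : PS) : PS :=
  expS (X 0 + X 1 * Φ) - 1 - X 0 - X 1 * Φ

lemma agr_T {n : ℕ} {Φ Ψ : PS} (h : Agr n Φ Ψ) : Agr (n + 1) (T Φ) (T Ψ) := by
  intro m hm
  have hm' : mdeg m ≤ n := by omega
  simp only [T, map_sub]
  rw [agr_exp h hm', agr_mul_X h hm']

noncomputable def seq : ℕ → PS
  | 0 => 0
  | n + 1 => T (seq n)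

lemma agr_seq (n : ℕ) : Agr n (seq n) (seq (n + 1)) := by
  induction n with
  | zero => intro m hm; omega
  | succ n ih => exact agr_T ih

lemma seq_stable {m : Fin 2 →₀ ℕ} {a b : ℕ} (ha : mdeg m < a) (hab : a ≤ b) :
    coeff m (seq a) = coeff m (seq b) := by
  induction b with
  | zero => omega
  | succ b ih =>
    rcases Nat.lt_or_ge a (b + 1) with h | h
    · rw [ih (by omega)]
      exact agr_seq b m (by omega)
    · have : a = b + 1 := by omega
      rw [this]

noncomputable def Φ0 : PS := fun m => coeff m (seq (mdeg m + 1))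

lemma Φ0_def : Φ0 = fun m => coeff m (seq (mdeg m + 1)) := rfl

lemma seq_succ (n : ℕ) : seq (n + 1) = T (seq n) := rfl

lemma Φ0_eq {m : Fin 2 →₀ ℕ} {n : ℕ} (h : mdeg m < n) :
    coeff m Φ0 = coeff m (seq n) := by
  have h1 : coeff m Φ0 = coeff m (seq (mdeg m + 1)) := by
    rw [Φ0_def, coeff_apply]; rfl
  rw [h1]
  exact seq_stable (Nat.lt_succ_self _) (by omega)

lemma agr_Φ0 (n : ℕ) : Agr n Φ0 (seq n) := fun _ hm => Φ0_eq hm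

lemma T_Φ0 : T Φ0 = Φ0 := by
  ext m
  rw [Φ0_eq (Nat.lt_succ_self (mdeg m)), seq_succ]
  exact agr_T (agr_Φ0 (mdeg m)) m (Nat.lt_succ_self _)

lemma T_unique {Φ Ψ : PS} (hΦ : T Φ = Φ) (hΨ : T Ψ = Ψ) : Φ = Ψ := by
  have key : ∀ n, Agr n Φ Ψ := by
    intro n
    induction n with
    | zero => intro m hm; omega
    | succ n ih => intro m hm; rw [← hΦ, ← hΨ]; exact agr_T ih m hm
  ext m
  exact key (mdeg m + 1) m (Nat.lt_succ_self _)

end Stmt13Aux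

/-- There is a unique `Φ ∈ ℚ[[x,s]]` with
`exp(x + sΦ) = 1 + x + (s+1)·Φ` (the generating series of stable trees). -/
theorem stmt13 :
    ∃! Φ : MvPowerSeries (Fin 2) ℚ,
      expS (MvPowerSeries.X 0 + MvPowerSeries.X 1 * Φ) =
        1 + MvPowerSeries.X 0 + (MvPowerSeries.X 1 + 1) * Φ := by
  have hiff : ∀ Φ : MvPowerSeries (Fin 2) ℚ,
      (expS (MvPowerSeries.X 0 + MvPowerSeries.X 1 * Φ) =
        1 + MvPowerSeries.X 0 + (MvPowerSeries.X 1 + 1) * Φ) ↔ Stmt13Aux.T Φ = Φ := by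
    intro Φ
    unfold Stmt13Aux.T
    constructor <;> intro h <;> linear_combination h
  exact ⟨Stmt13Aux.Φ0, (hiff _).mpr Stmt13Aux.T_Φ0,
    fun Ψ hΨ => Stmt13Aux.T_unique ((hiff Ψ).mp hΨ) Stmt13Aux.T_Φ0⟩
end

section
/- Let Φ ∈ ℚ[[x,s]] be the unique formal power series with Φ = exp(x + sΦ). Suppose Ψ₁ ∈ ℚ[[x,s]] satisfies the equation ∂Ψ₁/∂s = (1/2)·( ∂Φ/∂x + 2Φ·∂Ψ₁/∂x ) with initial condition Ψ₁|_{s=0} = 0. Then Ψ₁ = −(1/2)·log(1 − sΦ), where log(1−u) := −Σ_{k≥1} u^k/k (well defined since sΦ has zero constant coefficient). -/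
namespace Stmt14Aux

open MvPowerSeries Finset

/-! ### mdeg lemmas -/

lemma mdeg_add {σ : Type*} (p q : σ →₀ ℕ) : mdeg (p + q) = mdeg p + mdeg q := by
  unfold mdeg
  exact Finsupp.sum_add_index' (fun _ => rfl) (fun _ _ _ => rfl)

lemma mdeg_single {σ : Type*} (i : σ) (n : ℕ) : mdeg (Finsupp.single i n) = n := by
  unfold mdeg
  exact Finsupp.sum_single_index rfl

lemma mdeg_eq_zero {σ : Type*} {m : σ →₀ ℕ} (h : mdeg m = 0) : m = 0 := by
  ext i
  by_cases hi : i ∈ m.support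
  · have := Finset.sum_eq_zero_iff.mp h i hi
    simpa using this
  · simpa using Finsupp.notMem_support_iff.mp hi

/-! ### Basic lemmas about pd -/

section pdlemmas

variable {σ : Type*} [DecidableEq σ]

lemma coeff_pd (i : σ) (f : MvPowerSeries σ ℚ) (m : σ →₀ ℕ) :
    MvPowerSeries.coeff m (pd ℚ i f) =
      ((m i + 1 : ℕ) : ℚ) * MvPowerSeries.coeff (m + Finsupp.single i 1) f := rfl

lemma coeffq_smul (c : ℚ) (f : MvPowerSeries σ ℚ) (m : σ →₀ ℕ) :
    MvPowerSeries.coeff m (c • f) = c * MvPowerSeries.coeff m f := rfl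

lemma pd_add (i : σ) (f g : MvPowerSeries σ ℚ) :
    pd ℚ i (f + g) = pd ℚ i f + pd ℚ i g := by
  ext m
  simp [coeff_pd, map_add, mul_add]

lemma pd_smul (i : σ) (c : ℚ) (f : MvPowerSeries σ ℚ) :
    pd ℚ i (c • f) = c • pd ℚ i f := by
  ext m
  simp only [coeff_pd, coeffq_smul]
  ring

lemma pd_sub (i : σ) (f g : MvPowerSeries σ ℚ) :
    pd ℚ i (f - g) = pd ℚ i f - pd ℚ i g := by
  ext m
  simp [coeff_pd, map_sub, mul_sub]

lemma pd_sum (i : σ) {α : Type*} (s : Finset α) (F : α → MvPowerSeries σ ℚ) :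
    pd ℚ i (∑ k ∈ s, F k) = ∑ k ∈ s, pd ℚ i (F k) := by
  ext m
  rw [map_sum]
  simp only [coeff_pd, map_sum, Finset.mul_sum]

lemma pd_one (i : σ) : pd ℚ i (1 : MvPowerSeries σ ℚ) = 0 := by
  ext m
  rw [coeff_pd]
  have : (m + Finsupp.single i 1 : σ →₀ ℕ) ≠ 0 := by
    intro h
    have := congrFun (congrArg (fun f : σ →₀ ℕ => (f : σ → ℕ)) h) i
    simp [Finsupp.single_apply] at this
  simp [MvPowerSeries.coeff_one, this]

lemma pd_neg (i : σ) (f : MvPowerSeries σ ℚ) : pd ℚ i (-f) = -pd ℚ i f := by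
  ext m
  simp [coeff_pd, mul_comm]

/-- The Leibniz rule for `pd`. -/
lemma pd_mul (i : σ) (f g : MvPowerSeries σ ℚ) :
    pd ℚ i (f * g) = pd ℚ i f * g + f * pd ℚ i g := by
  ext m
  rw [map_add, coeff_pd, MvPowerSeries.coeff_mul, MvPowerSeries.coeff_mul,
    MvPowerSeries.coeff_mul, Finset.mul_sum]
  have key : ∀ p : (σ →₀ ℕ) × (σ →₀ ℕ), p ∈ Finset.HasAntidiagonal.antidiagonal (m + Finsupp.single i 1) →
      ((m i + 1 : ℕ) : ℚ) * (MvPowerSeries.coeff p.1 f * MvPowerSeries.coeff p.2 g)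
        = ((p.1 i : ℕ) : ℚ) * (MvPowerSeries.coeff p.1 f * MvPowerSeries.coeff p.2 g)
        + ((p.2 i : ℕ) : ℚ) * (MvPowerSeries.coeff p.1 f * MvPowerSeries.coeff p.2 g) := by
    intro p hp
    rw [Finset.HasAntidiagonal.mem_antidiagonal] at hp
    have : p.1 i + p.2 i = m i + 1 := by
      have := congrFun (congrArg (fun f : σ →₀ ℕ => (f : σ → ℕ)) hp) i
      simpa [Finsupp.single_apply] using this
    rw [← this]
    push_cast
    ring
  rw [Finset.sum_congr rfl key, Finset.sum_add_distrib]
  congr 1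
  -- first sum
  · rw [Finset.sum_bij_ne_zero
      (i := fun p _ _ => ((p.1 - Finsupp.single i 1 : σ →₀ ℕ), p.2))]
    · intro p hp hne
      rw [Finset.HasAntidiagonal.mem_antidiagonal] at hp ⊢
      have hle : Finsupp.single i 1 ≤ p.1 := by
        rw [Finsupp.single_le_iff]
        by_contra h
        have : p.1 i = 0 := by omega
        simp [this] at hne
      have h1 : (p.1 - Finsupp.single i 1) + Finsupp.single i 1 = p.1 :=
        tsub_add_cancel_of_le hle
      have : ((p.1 - Finsupp.single i 1) + p.2) + Finsupp.single i 1
          = m + Finsupp.single i 1 := by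
        rw [add_right_comm, h1, hp]
      exact add_right_cancel this
    · intro p hp h1 q hq h2 heq
      have hlep : Finsupp.single i 1 ≤ p.1 := by
        rw [Finsupp.single_le_iff]
        by_contra h
        have : p.1 i = 0 := by omega
        simp [this] at h1
      have hleq : Finsupp.single i 1 ≤ q.1 := by
        rw [Finsupp.single_le_iff]
        by_contra h
        have : q.1 i = 0 := by omega
        simp [this] at h2
      have e1 := congrArg Prod.fst heq
      have e2 := congrArg Prod.snd heq
      simp only at e1 e2
      have : p.1 = q.1 := by
        have := congrArg (fun z : σ →₀ ℕ => z + Finsupp.single i 1) e1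
        simpa [tsub_add_cancel_of_le hlep, tsub_add_cancel_of_le hleq] using this
      exact Prod.ext this e2
    · intro q hq hne
      rw [Finset.HasAntidiagonal.mem_antidiagonal] at hq
      refine ⟨(q.1 + Finsupp.single i 1, q.2), ?_, ?_, ?_⟩
      · rw [Finset.HasAntidiagonal.mem_antidiagonal]
        simp only
        rw [add_right_comm, hq]
      · simp only
        intro h
        apply hne
        have hc : ((q.1 i + 1 : ℕ) : ℚ) *
            (MvPowerSeries.coeff (q.1 + Finsupp.single i 1) f *
             MvPowerSeries.coeff q.2 g) = 0 := by
          simpa [Finsupp.add_apply, Finsupp.single_apply] using h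
        rw [coeff_pd, mul_assoc]
        exact hc
      · simp
    · intro p hp hne
      have hle : Finsupp.single i 1 ≤ p.1 := by
        rw [Finsupp.single_le_iff]
        by_contra h
        have : p.1 i = 0 := by omega
        simp [this] at hne
      have h1 : (p.1 - Finsupp.single i 1) + Finsupp.single i 1 = p.1 :=
        tsub_add_cancel_of_le hle
      have hpi : (p.1 - Finsupp.single i 1 : _ →₀ _) i + 1 = p.1 i := by
        have := congrFun (congrArg (fun f : σ →₀ ℕ => (f : σ → ℕ)) h1) i
        simpa [Finsupp.single_apply] using this
      rw [coeff_pd]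
      rw [h1, hpi]
      ring
  -- second sum
  · rw [Finset.sum_bij_ne_zero
      (i := fun p _ _ => (p.1, (p.2 - Finsupp.single i 1 : σ →₀ ℕ)))]
    · intro p hp hne
      rw [Finset.HasAntidiagonal.mem_antidiagonal] at hp ⊢
      have hle : Finsupp.single i 1 ≤ p.2 := by
        rw [Finsupp.single_le_iff]
        by_contra h
        have : p.2 i = 0 := by omega
        simp [this] at hne
      have h1 : (p.2 - Finsupp.single i 1) + Finsupp.single i 1 = p.2 :=
        tsub_add_cancel_of_le hle
      have : (p.1 + (p.2 - Finsupp.single i 1)) + Finsupp.single i 1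
          = m + Finsupp.single i 1 := by
        rw [add_assoc, h1, hp]
      exact add_right_cancel this
    · intro p hp h1 q hq h2 heq
      have hlep : Finsupp.single i 1 ≤ p.2 := by
        rw [Finsupp.single_le_iff]
        by_contra h
        have : p.2 i = 0 := by omega
        simp [this] at h1
      have hleq : Finsupp.single i 1 ≤ q.2 := by
        rw [Finsupp.single_le_iff]
        by_contra h
        have : q.2 i = 0 := by omega
        simp [this] at h2
      have e1 := congrArg Prod.fst heq
      have e2 := congrArg Prod.snd heq
      simp only at e1 e2
      have : p.2 = q.2 := by
        have := congrArg (fun z : σ →₀ ℕ => z + Finsupp.single i 1) e2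
        simpa [tsub_add_cancel_of_le hlep, tsub_add_cancel_of_le hleq] using this
      exact Prod.ext e1 this
    · intro q hq hne
      rw [Finset.HasAntidiagonal.mem_antidiagonal] at hq
      refine ⟨(q.1, q.2 + Finsupp.single i 1), ?_, ?_, ?_⟩
      · rw [Finset.HasAntidiagonal.mem_antidiagonal]
        simp only
        rw [← add_assoc, hq]
      · simp only
        intro h
        apply hne
        have hc : ((q.2 i + 1 : ℕ) : ℚ) *
            (MvPowerSeries.coeff q.1 f *
             MvPowerSeries.coeff (q.2 + Finsupp.single i 1) g) = 0 := by
          simpa [Finsupp.add_apply, Finsupp.single_apply] using h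
        rw [coeff_pd]
        calc MvPowerSeries.coeff q.1 f * (((q.2 i + 1 : ℕ) : ℚ) *
            MvPowerSeries.coeff (q.2 + Finsupp.single i 1) g)
            = ((q.2 i + 1 : ℕ) : ℚ) * (MvPowerSeries.coeff q.1 f *
              MvPowerSeries.coeff (q.2 + Finsupp.single i 1) g) := by ring
          _ = 0 := hc
      · simp
    · intro p hp hne
      have hle : Finsupp.single i 1 ≤ p.2 := by
        rw [Finsupp.single_le_iff]
        by_contra h
        have : p.2 i = 0 := by omega
        simp [this] at hne
      have h1 : (p.2 - Finsupp.single i 1) + Finsupp.single i 1 = p.2 :=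
        tsub_add_cancel_of_le hle
      have hpi : (p.2 - Finsupp.single i 1 : _ →₀ _) i + 1 = p.2 i := by
        have := congrFun (congrArg (fun f : σ →₀ ℕ => (f : σ → ℕ)) h1) i
        simpa [Finsupp.single_apply] using this
      rw [coeff_pd]
      rw [h1, hpi]
      ring

lemma pd_X_self (i : σ) : pd ℚ i (MvPowerSeries.X i : MvPowerSeries σ ℚ) = 1 := by
  ext m
  rw [coeff_pd, MvPowerSeries.coeff_X, MvPowerSeries.coeff_one]
  by_cases hm : m = 0
  · subst hm; simp
  · have : m + Finsupp.single i 1 ≠ Finsupp.single i 1 := by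
      intro h
      exact hm (add_right_cancel (h.trans (zero_add _).symm))
    simp [this, hm]

lemma pd_X_ne {i j : σ} (h : i ≠ j) :
    pd ℚ i (MvPowerSeries.X j : MvPowerSeries σ ℚ) = 0 := by
  ext m
  rw [coeff_pd, MvPowerSeries.coeff_X]
  have : m + Finsupp.single i 1 ≠ Finsupp.single j 1 := by
    intro he
    have := congrFun (congrArg (fun f : σ →₀ ℕ => (f : σ → ℕ)) he) i
    simp [Finsupp.single_apply, h, (Ne.symm h)] at this
  simp [this]

lemma pd_pow_succ (i : σ) (f : MvPowerSeries σ ℚ) (n : ℕ) :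
    pd ℚ i (f ^ (n + 1)) = ((n + 1 : ℕ) : MvPowerSeries σ ℚ) * (f ^ n * pd ℚ i f) := by
  induction n with
  | zero => simp [pd_mul, pow_succ]
  | succ n ih =>
    rw [pow_succ (n := n + 1), pd_mul, ih]
    push_cast
    ring

end pdlemmas

/-! ### Order / truncation lemmas -/

section orderlemmas

variable {σ : Type*} [DecidableEq σ]

lemma coeff_pow_eq_zero {f : MvPowerSeries σ ℚ}
    (h0 : MvPowerSeries.coeff 0 f = 0) :
    ∀ (k : ℕ) (m : σ →₀ ℕ), mdeg m < k → MvPowerSeries.coeff m (f ^ k) = 0 := by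
  intro k
  induction k with
  | zero => intro m hm; omega
  | succ k ih =>
    intro m hm
    rw [pow_succ, MvPowerSeries.coeff_mul]
    apply Finset.sum_eq_zero
    intro p hp
    rw [Finset.HasAntidiagonal.mem_antidiagonal] at hp
    have hdeg : mdeg p.1 + mdeg p.2 = mdeg m := by rw [← mdeg_add, hp]
    by_cases h1 : mdeg p.1 < k
    · rw [ih p.1 h1, zero_mul]
    · have : mdeg p.2 = 0 := by omega
      have : p.2 = 0 := mdeg_eq_zero this
      rw [this, h0, mul_zero]

/-- Truncated exponential. -/
noncomputable def Epoly (f : MvPowerSeries σ ℚ) (N : ℕ) : MvPowerSeries σ ℚ :=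
  ∑ k ∈ Finset.range (N + 1), ((k.factorial : ℚ)⁻¹) • f ^ k

/-- Truncated logarithm. -/
noncomputable def Lpoly (u : MvPowerSeries σ ℚ) (N : ℕ) : MvPowerSeries σ ℚ :=
  - ∑ k ∈ Finset.Icc 1 N, ((k : ℚ)⁻¹) • u ^ k

lemma coeff_expS {f : MvPowerSeries σ ℚ} (h0 : MvPowerSeries.coeff 0 f = 0)
    {m : σ →₀ ℕ} {N : ℕ} (h : mdeg m ≤ N) :
    MvPowerSeries.coeff m (expS f) = MvPowerSeries.coeff m (Epoly f N) := by
  have : MvPowerSeries.coeff m (expS f) = MvPowerSeries.coeff m (Epoly f (mdeg m)) := rfl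
  rw [this]
  unfold Epoly
  rw [map_sum, map_sum]
  apply Finset.sum_subset
  · intro k hk
    rw [Finset.mem_range] at hk ⊢
    omega
  · intro k hk hk'
    rw [Finset.mem_range] at hk hk'
    rw [coeffq_smul, coeff_pow_eq_zero h0 k m (by omega), mul_zero]

lemma coeff_logOneSubS {u : MvPowerSeries σ ℚ} (h0 : MvPowerSeries.coeff 0 u = 0)
    {m : σ →₀ ℕ} {N : ℕ} (h : mdeg m ≤ N) :
    MvPowerSeries.coeff m (logOneSubS u) = MvPowerSeries.coeff m (Lpoly u N) := by
  have : MvPowerSeries.coeff m (logOneSubS u)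
      = MvPowerSeries.coeff m (Lpoly u (mdeg m)) := rfl
  rw [this]
  unfold Lpoly
  rw [map_neg, map_neg, map_sum, map_sum]
  congr 1
  apply Finset.sum_subset
  · intro k hk
    rw [Finset.mem_Icc] at hk ⊢
    omega
  · intro k hk hk'
    rw [Finset.mem_Icc] at hk hk'
    rw [coeffq_smul, coeff_pow_eq_zero h0 k m (by omega), mul_zero]

lemma coeff_mul_congr {a b c : MvPowerSeries σ ℚ} {n : ℕ}
    (h : ∀ m' : σ →₀ ℕ, mdeg m' ≤ n → MvPowerSeries.coeff m' a = MvPowerSeries.coeff m' b)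
    {m : σ →₀ ℕ} (hm : mdeg m ≤ n) :
    MvPowerSeries.coeff m (c * a) = MvPowerSeries.coeff m (c * b) := by
  rw [MvPowerSeries.coeff_mul, MvPowerSeries.coeff_mul]
  apply Finset.sum_congr rfl
  intro p hp
  rw [Finset.HasAntidiagonal.mem_antidiagonal] at hp
  have : mdeg p.2 ≤ n := by
    have := mdeg_add p.1 p.2
    rw [hp] at this
    omega
  rw [h p.2 this]

lemma coeff_mul_pow_eq_zero {f g : MvPowerSeries σ ℚ}
    (h0 : MvPowerSeries.coeff 0 f = 0) {m : σ →₀ ℕ} {N : ℕ} (h : mdeg m < N) :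
    MvPowerSeries.coeff m (f ^ N * g) = 0 := by
  rw [MvPowerSeries.coeff_mul]
  apply Finset.sum_eq_zero
  intro p hp
  rw [Finset.HasAntidiagonal.mem_antidiagonal] at hp
  have : mdeg p.1 ≤ mdeg m := by
    have := mdeg_add p.1 p.2
    rw [hp] at this
    omega
  rw [coeff_pow_eq_zero h0 N p.1 (by omega), zero_mul]

/-! ### Derivatives of truncations -/

lemma pd_Epoly (i : σ) (f : MvPowerSeries σ ℚ) (N : ℕ) :
    pd ℚ i (Epoly f (N + 1)) = pd ℚ i f * Epoly f N := by
  unfold Epoly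
  rw [pd_sum]
  rw [Finset.sum_range_succ']
  simp only [pd_smul]
  rw [pow_zero, pd_one, smul_zero, add_zero]
  have : ∀ k ∈ Finset.range (N + 1),
      (((k + 1).factorial : ℚ)⁻¹) • pd ℚ i (f ^ (k + 1))
        = ((k.factorial : ℚ)⁻¹) • (f ^ k * pd ℚ i f) := by
    intro k _
    rw [pd_pow_succ]
    have hcast : ((k + 1 : ℕ) : MvPowerSeries σ ℚ) * (f ^ k * pd ℚ i f)
        = ((k + 1 : ℕ) : ℚ) • (f ^ k * pd ℚ i f) := by
      rw [Algebra.smul_def]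
      norm_num
    rw [hcast, smul_smul]
    congr 1
    rw [Nat.factorial_succ]
    push_cast
    field_simp
  rw [Finset.sum_congr rfl this, Finset.mul_sum]
  apply Finset.sum_congr rfl
  intro k _
  rw [mul_smul_comm]
  congr 1
  ring

lemma pd_Lpoly (i : σ) (u : MvPowerSeries σ ℚ) (N : ℕ) :
    pd ℚ i (Lpoly u N) = -((∑ j ∈ Finset.range N, u ^ j) * pd ℚ i u) := by
  unfold Lpoly
  rw [pd_neg, pd_sum]
  congr 1
  have hIcc : Finset.Icc 1 N = Finset.Ico 1 (N + 1) := by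
    rw [Finset.Ico_add_one_right_eq_Icc]
  rw [hIcc, Finset.sum_Ico_eq_sum_range]
  simp only [Nat.add_sub_cancel]
  rw [Finset.sum_mul]
  apply Finset.sum_congr rfl
  intro j _
  rw [pd_smul, add_comm 1 j, pd_pow_succ]
  have hcast : ((j + 1 : ℕ) : MvPowerSeries σ ℚ) * (u ^ j * pd ℚ i u)
      = ((j + 1 : ℕ) : ℚ) • (u ^ j * pd ℚ i u) := by
    rw [Algebra.smul_def]
    norm_num
  rw [hcast, smul_smul]
  have : ((j + 1 : ℕ) : ℚ)⁻¹ * ((j + 1 : ℕ) : ℚ) = 1 := by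
    rw [inv_mul_cancel₀]
    exact_mod_cast Nat.succ_ne_zero j
  push_cast at this ⊢
  rw [this, one_smul]

/-! ### Chain rules -/

lemma pd_expS (i : σ) {f : MvPowerSeries σ ℚ} (h0 : MvPowerSeries.coeff 0 f = 0) :
    pd ℚ i (expS f) = pd ℚ i f * expS f := by
  ext m
  set n := mdeg m with hn
  have hmi : mdeg (m + Finsupp.single i 1) = n + 1 := by
    rw [mdeg_add, mdeg_single]
  have lhs1 : MvPowerSeries.coeff m (pd ℚ i (expS f))
      = MvPowerSeries.coeff m (pd ℚ i (Epoly f (n + 1))) := by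
    rw [coeff_pd, coeff_pd, coeff_expS h0 (le_of_eq hmi)]
  rw [lhs1, pd_Epoly]
  symm
  exact coeff_mul_congr (fun m' hm' => coeff_expS h0 hm') (le_refl n)

lemma pd_logOneSubS (i : σ) {u : MvPowerSeries σ ℚ}
    (h0 : MvPowerSeries.coeff 0 u = 0) :
    (1 - u) * pd ℚ i (logOneSubS u) = -(pd ℚ i u) := by
  ext m
  set n := mdeg m with hn
  have step1 : MvPowerSeries.coeff m ((1 - u) * pd ℚ i (logOneSubS u))
      = MvPowerSeries.coeff m ((1 - u) * pd ℚ i (Lpoly u (n + 1))) := by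
    apply coeff_mul_congr (n := n) _ (le_refl n)
    intro m' hm'
    rw [coeff_pd, coeff_pd]
    have : mdeg (m' + Finsupp.single i 1) ≤ n + 1 := by
      rw [mdeg_add, mdeg_single]
      omega
    rw [coeff_logOneSubS h0 this]
  rw [step1, pd_Lpoly]
  have geom : (1 - u) * -((∑ j ∈ Finset.range (n + 1), u ^ j) * pd ℚ i u)
      = -(pd ℚ i u) + u ^ (n + 1) * pd ℚ i u := by
    have hg := geom_sum_mul u (n + 1)
    have : (1 - u) * (∑ j ∈ Finset.range (n + 1), u ^ j) = 1 - u ^ (n + 1) := by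
      have := congrArg (fun x => -x) hg
      simp only [neg_sub] at this
      calc (1 - u) * (∑ j ∈ Finset.range (n + 1), u ^ j)
          = (∑ j ∈ Finset.range (n + 1), u ^ j) * -(u - 1) := by ring
        _ = -((∑ j ∈ Finset.range (n + 1), u ^ j) * (u - 1)) := by ring
        _ = -(u ^ (n + 1) - 1) := by rw [hg]
        _ = 1 - u ^ (n + 1) := by ring
    calc (1 - u) * -((∑ j ∈ Finset.range (n + 1), u ^ j) * pd ℚ i u)
        = -(((1 - u) * (∑ j ∈ Finset.range (n + 1), u ^ j)) * pd ℚ i u) := by ring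
      _ = -((1 - u ^ (n + 1)) * pd ℚ i u) := by rw [this]
      _ = -(pd ℚ i u) + u ^ (n + 1) * pd ℚ i u := by ring
  rw [geom, map_add, coeff_mul_pow_eq_zero h0 (by omega), add_zero]

end orderlemmas

end Stmt14Aux

open Stmt14Aux MvPowerSeries

/-- Let `Φ = exp(x + sΦ)`.  If `Ψ₁` satisfies
`∂Ψ₁/∂s = ½(∂Φ/∂x + 2Φ·∂Ψ₁/∂x)` with `Ψ₁|_{s=0} = 0`, then `Ψ₁ = −½·log(1 − sΦ)`.
(Here `x = X 0`, `s = X 1`.) -/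
theorem stmt14 (Φ Ψ₁ : MvPowerSeries (Fin 2) ℚ)
    (hΦ : Φ = expS (MvPowerSeries.X 0 + MvPowerSeries.X 1 * Φ))
    (heq : pd ℚ 1 Ψ₁ = (2 : ℚ)⁻¹ • (pd ℚ 0 Φ + 2 * Φ * pd ℚ 0 Ψ₁))
    (hinit : ∀ n : ℕ, MvPowerSeries.coeff (Finsupp.single 0 n) Ψ₁ = 0) :
    Ψ₁ = -((2 : ℚ)⁻¹) • logOneSubS (MvPowerSeries.X 1 * Φ) := by
  classical
  set u : MvPowerSeries (Fin 2) ℚ := MvPowerSeries.X 1 * Φ with hu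
  set L : MvPowerSeries (Fin 2) ℚ := logOneSubS u with hL
  set Ψ : MvPowerSeries (Fin 2) ℚ := -((2 : ℚ)⁻¹) • L with hΨdef
  -- constant coefficients
  have hu0 : MvPowerSeries.coeff 0 u = 0 := by
    rw [MvPowerSeries.coeff_zero_eq_constantCoeff, hu, map_mul,
      MvPowerSeries.constantCoeff_X, zero_mul]
  have hg0 : MvPowerSeries.coeff 0 (MvPowerSeries.X 0 + u) = 0 := by
    rw [MvPowerSeries.coeff_zero_eq_constantCoeff, map_add,
      MvPowerSeries.constantCoeff_X, hu, map_mul, MvPowerSeries.constantCoeff_X,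
      zero_mul, add_zero]
  have hne : (1 : MvPowerSeries (Fin 2) ℚ) - u ≠ 0 := by
    intro h
    have h1 := congrArg (MvPowerSeries.constantCoeff (σ := Fin 2) (R := ℚ)) h
    rw [map_sub, map_one, map_zero] at h1
    rw [MvPowerSeries.coeff_zero_eq_constantCoeff] at hu0
    rw [hu0] at h1
    norm_num at h1
  have h01 : (0 : Fin 2) ≠ 1 := by decide
  have h10 : (1 : Fin 2) ≠ 0 := by decide
  -- derivatives of Φ
  have hΦ' : Φ = expS (MvPowerSeries.X 0 + u) := hΦ
  have hA0 : pd ℚ 0 Φ = (1 + MvPowerSeries.X 1 * pd ℚ 0 Φ) * Φ := by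
    conv_lhs => rw [hΦ']
    rw [pd_expS 0 hg0, ← hΦ', pd_add, pd_X_self, hu, pd_mul, pd_X_ne h01]
    ring
  have hA1 : pd ℚ 1 Φ = (Φ + MvPowerSeries.X 1 * pd ℚ 1 Φ) * Φ := by
    conv_lhs => rw [hΦ']
    rw [pd_expS 1 hg0, ← hΦ', pd_add, pd_X_ne h10, hu, pd_mul, pd_X_self]
    ring
  have h4 : pd ℚ 0 Φ = Φ + MvPowerSeries.X 1 * pd ℚ 1 Φ := by
    have hz : (1 - u) * (pd ℚ 0 Φ - (Φ + MvPowerSeries.X 1 * pd ℚ 1 Φ)) = 0 := by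
      rw [hu]
      linear_combination hA0 - MvPowerSeries.X 1 * hA1
    rcases mul_eq_zero.mp hz with h | h
    · exact absurd h hne
    · exact sub_eq_zero.mp h
  -- derivatives of u
  have hdu0 : pd ℚ 0 u = MvPowerSeries.X 1 * pd ℚ 0 Φ := by
    rw [hu, pd_mul, pd_X_ne h01]
    ring
  have hdu1 : pd ℚ 1 u = pd ℚ 0 Φ := by
    rw [hu, pd_mul, pd_X_self, one_mul, ← h4]
  -- derivatives of L
  have hL0 : (1 - u) * pd ℚ 0 L = -(pd ℚ 0 u) := pd_logOneSubS 0 hu0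
  have hL1 : (1 - u) * pd ℚ 1 L = -(pd ℚ 1 u) := pd_logOneSubS 1 hu0
  have key : pd ℚ 1 L = Φ * pd ℚ 0 L - pd ℚ 0 Φ := by
    apply mul_left_cancel₀ hne
    have huXΦ : u = MvPowerSeries.X 1 * Φ := hu
    linear_combination hL1 - Φ * hL0 + Φ * hdu0 - hdu1 - pd ℚ 0 Φ * huXΦ
  -- helper for scalars
  have h2mul : ∀ Z : MvPowerSeries (Fin 2) ℚ, (2 : MvPowerSeries (Fin 2) ℚ) * Z = (2 : ℚ) • Z := by
    intro Z
    rw [Algebra.smul_def, map_ofNat]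
  -- Ψ satisfies the PDE
  have heqΨ : pd ℚ 1 Ψ = (2 : ℚ)⁻¹ • (pd ℚ 0 Φ + 2 * Φ * pd ℚ 0 Ψ) := by
    rw [hΨdef, pd_smul, pd_smul, key]
    have step : (2 : MvPowerSeries (Fin 2) ℚ) * Φ * ((-(2 : ℚ)⁻¹) • pd ℚ 0 L)
        = (-1 : ℚ) • (Φ * pd ℚ 0 L) := by
      rw [mul_assoc, mul_smul_comm, h2mul, smul_smul]
      norm_num
    rw [step, smul_sub, smul_add, smul_smul]
    ext m
    rw [map_sub, map_add]
    rw [coeffq_smul, coeffq_smul, coeffq_smul, coeffq_smul]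
    ring
  -- Ψ satisfies the initial condition
  have hucoeff : ∀ p : Fin 2 →₀ ℕ, p 1 = 0 → MvPowerSeries.coeff p u = 0 := by
    intro p hp
    rw [hu, MvPowerSeries.coeff_mul]
    apply Finset.sum_eq_zero
    intro q hq
    rw [Finset.HasAntidiagonal.mem_antidiagonal] at hq
    rw [MvPowerSeries.coeff_X]
    by_cases hq1 : q.1 = Finsupp.single 1 1
    · exfalso
      have := congrFun (congrArg (fun f : Fin 2 →₀ ℕ => (f : Fin 2 → ℕ)) hq) 1
      rw [hq1] at this
      simp [Finsupp.add_apply, Finsupp.single_apply] at this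
      omega
    · simp [hq1]
  have hpowcoeff : ∀ k : ℕ, 1 ≤ k → ∀ p : Fin 2 →₀ ℕ, p 1 = 0 →
      MvPowerSeries.coeff p (u ^ k) = 0 := by
    intro k hk p hp
    obtain ⟨j, rfl⟩ : ∃ j, k = j + 1 := ⟨k - 1, by omega⟩
    rw [pow_succ, MvPowerSeries.coeff_mul]
    apply Finset.sum_eq_zero
    intro q hq
    rw [Finset.HasAntidiagonal.mem_antidiagonal] at hq
    have hq2 : q.2 1 = 0 := by
      have := congrFun (congrArg (fun f : Fin 2 →₀ ℕ => (f : Fin 2 → ℕ)) hq) 1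
      simp [Finsupp.add_apply] at this
      omega
    rw [hucoeff q.2 hq2, mul_zero]
  have hLcoeff : ∀ p : Fin 2 →₀ ℕ, p 1 = 0 → MvPowerSeries.coeff p L = 0 := by
    intro p hp
    rw [hL]
    have : MvPowerSeries.coeff p (logOneSubS u)
        = MvPowerSeries.coeff p (Stmt14Aux.Lpoly u (mdeg p)) :=
      coeff_logOneSubS hu0 (le_refl _)
    rw [this]
    unfold Stmt14Aux.Lpoly
    rw [map_neg, map_sum, neg_eq_zero]
    apply Finset.sum_eq_zero
    intro k hk
    rw [Finset.mem_Icc] at hk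
    rw [coeffq_smul, hpowcoeff k hk.1 p hp, mul_zero]
  have hinitΨ : ∀ n : ℕ, MvPowerSeries.coeff (Finsupp.single 0 n) Ψ = 0 := by
    intro n
    rw [hΨdef, coeffq_smul, hLcoeff]
    · rw [mul_zero]
    · simp [Finsupp.single_apply, h01]
  -- uniqueness
  set D : MvPowerSeries (Fin 2) ℚ := Ψ₁ - Ψ with hD
  have hDpde : pd ℚ 1 D = Φ * pd ℚ 0 D := by
    rw [hD, pd_sub, pd_sub, heq, heqΨ, ← smul_sub]
    have hring : (pd ℚ 0 Φ + 2 * Φ * pd ℚ 0 Ψ₁) - (pd ℚ 0 Φ + 2 * Φ * pd ℚ 0 Ψ)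
        = 2 * (Φ * (pd ℚ 0 Ψ₁ - pd ℚ 0 Ψ)) := by ring
    rw [hring, h2mul, smul_smul]
    norm_num
  have hDinit : ∀ n : ℕ, MvPowerSeries.coeff (Finsupp.single 0 n) D = 0 := by
    intro n
    rw [hD, map_sub, hinit, hinitΨ, sub_zero]
  have main : ∀ b : ℕ, ∀ m : Fin 2 →₀ ℕ, m 1 = b → MvPowerSeries.coeff m D = 0 := by
    intro b
    induction b using Nat.strong_induction_on with
    | _ b ih =>
      rcases b with _ | n
      · intro m hm
        have hmeq : m = Finsupp.single 0 (m 0) := by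
          ext j
          have hj : j = 0 ∨ j = 1 := by
            rcases j with ⟨jv, hjv⟩
            interval_cases jv
            · left; rfl
            · right; rfl
          rcases hj with rfl | rfl
          · simp [Finsupp.single_apply]
          · rw [hm]
            simp [Finsupp.single_apply, h01]
        rw [hmeq]
        exact hDinit (m 0)
      · intro m hm
        have hle : Finsupp.single (1 : Fin 2) 1 ≤ m := Finsupp.single_le_iff.mpr (by omega)
        have hsum : (m - Finsupp.single 1 1) + Finsupp.single 1 1 = m :=
          tsub_add_cancel_of_le hle
        set m' : Fin 2 →₀ ℕ := m - Finsupp.single 1 1 with hm'def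
        have hm'1 : m' 1 = n := by
          have := congrFun (congrArg (fun f : Fin 2 →₀ ℕ => (f : Fin 2 → ℕ)) hsum) 1
          simp [Finsupp.add_apply, Finsupp.single_apply] at this
          omega
        have hpdc : MvPowerSeries.coeff m' (pd ℚ 1 D)
            = ((m' 1 + 1 : ℕ) : ℚ) * MvPowerSeries.coeff m D := by
          rw [coeff_pd, hsum]
        have hmulc : MvPowerSeries.coeff m' (Φ * pd ℚ 0 D) = 0 := by
          rw [MvPowerSeries.coeff_mul]
          apply Finset.sum_eq_zero
          intro q hq
          rw [Finset.HasAntidiagonal.mem_antidiagonal] at hq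
          have hq2 : q.2 1 ≤ n := by
            have := congrFun (congrArg (fun f : Fin 2 →₀ ℕ => (f : Fin 2 → ℕ)) hq) 1
            simp [Finsupp.add_apply] at this
            omega
          have hc : MvPowerSeries.coeff q.2 (pd ℚ 0 D)
              = ((q.2 0 + 1 : ℕ) : ℚ) *
                MvPowerSeries.coeff (q.2 + Finsupp.single 0 1) D := coeff_pd 0 D q.2
          have he1 : (q.2 + Finsupp.single 0 1 : Fin 2 →₀ ℕ) 1 = q.2 1 := by
            simp [Finsupp.add_apply, Finsupp.single_apply, h01]
          have hz : MvPowerSeries.coeff (q.2 + Finsupp.single 0 1) D = 0 :=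
            ih (q.2 1) (by omega) _ he1
          rw [hc, hz, mul_zero, mul_zero]
        have hcoeq := congrArg (MvPowerSeries.coeff m') hDpde
        rw [hpdc, hmulc] at hcoeq
        have hnz : ((m' 1 + 1 : ℕ) : ℚ) ≠ 0 := by
          exact_mod_cast Nat.succ_ne_zero (m' 1)
        exact (mul_eq_zero.mp hcoeq).resolve_left hnz
  have : D = 0 := by
    apply MvPowerSeries.ext
    intro m
    rw [map_zero]
    exact main (m 1) m rfl
  have := sub_eq_zero.mp (hD ▸ this)
  rw [this, hΨdef, hL, hu]
end
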